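/- Let E be a subgroup of S_n, let 2 ≤ m ≤ n, and let I be the cyclic subgroup generated by some fixed m-cycle in S_n. Then the cardinality of the set Y = {σ ∈ S_n : σ I σ⁻¹ ⊆ E} equals (number of m-cycles contained in E) · m · (n−m)!. -/

import Mathlib

open Equiv Equiv.Perm

lemma aux_ofSubtype_injective {α : Type*} [DecidableEq α] [Fintype α]
    {p : α → Prop} [DecidablePred p] :
    Function.Injective (Equiv.Perm.ofSubtype (p := p)) := by
  intro f g h
  ext x
  have h1 : ofSubtype f x.1 = ofSubtype g x.1 := by rw [h]
  rw [ofSubtype_apply_of_mem f x.2, ofSubtype_apply_of_mem g x.2] at h1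
  exact h1

/-- The centralizer of an `m`-cycle has cardinality `m * (n-m)!`. -/
lemma card_commute_cycle (n m : ℕ) (hmn : m ≤ n)
    (c : Equiv.Perm (Fin n)) (hc : c.IsCycle) (hcard : c.support.card = m) :
    Nat.card {z : Equiv.Perm (Fin n) // Commute z c} = m * (n - m).factorial := by
  classical
  set p : Fin n → Prop := fun x => x ∉ c.support with hp
  have hψ : ∀ (z : Subgroup.zpowers c) (f : Equiv.Perm {x : Fin n // p x}),
      Commute ((z : Equiv.Perm (Fin n)) * ofSubtype f) c := by
    rintro ⟨z, k, rfl⟩ f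
    apply Commute.mul_left
    · exact (Commute.refl c).zpow_left k
    · apply Equiv.Perm.Disjoint.commute
      intro x
      by_cases hx : x ∈ c.support
      · left
        exact ofSubtype_apply_of_not_mem f (by simpa [hp] using hx)
      · right
        simpa using hx
  let ψ : Subgroup.zpowers c × Equiv.Perm {x : Fin n // p x} →
      {z : Equiv.Perm (Fin n) // Commute z c} :=
    fun zf => ⟨(zf.1 : Equiv.Perm (Fin n)) * ofSubtype zf.2, hψ zf.1 zf.2⟩
  have hbij : Function.Bijective ψ := by
    constructor
    · rintro ⟨z1, f1⟩ ⟨z2, f2⟩ h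
      have h' : (z1 : Equiv.Perm (Fin n)) * ofSubtype f1
          = (z2 : Equiv.Perm (Fin n)) * ofSubtype f2 := congrArg Subtype.val h
      have hz : (z1 : Equiv.Perm (Fin n)) = z2 := by
        apply Equiv.ext; intro x
        by_cases hx : x ∈ c.support
        · have hf1 : ofSubtype f1 x = x := ofSubtype_apply_of_not_mem f1 (by simpa [hp] using hx)
          have hf2 : ofSubtype f2 x = x := ofSubtype_apply_of_not_mem f2 (by simpa [hp] using hx)
          have := congrFun (congrArg (fun (g : Equiv.Perm (Fin n)) => (g : Fin n → Fin n)) h') x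
          simpa [hf1, hf2] using this
        · obtain ⟨k1, hk1⟩ := z1.2
          obtain ⟨k2, hk2⟩ := z2.2
          have h1 : (z1 : Equiv.Perm (Fin n)) x = x := by
            rw [← hk1]
            exact Equiv.Perm.notMem_support.mp
              (fun hmem => hx (Equiv.Perm.support_zpow_le c k1 hmem))
          have h2 : (z2 : Equiv.Perm (Fin n)) x = x := by
            rw [← hk2]
            exact Equiv.Perm.notMem_support.mp
              (fun hmem => hx (Equiv.Perm.support_zpow_le c k2 hmem))
          rw [h1, h2]
      have hf : f1 = f2 := by
        apply aux_ofSubtype_injective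
        have := h'
        rw [hz] at this
        exact mul_left_cancel this
      exact Prod.ext (Subtype.ext hz) hf
    · rintro ⟨g, hg⟩
      obtain ⟨hc', hz⟩ := (hc.commute_iff (g := g)).mp hg
      have h2 : ∀ x : Fin n, p (g x) ↔ p x := by
        intro x
        simp only [hp]
        exact not_congr (hc' x)
      refine ⟨⟨⟨ofSubtype (subtypePerm g hc'), hz⟩, subtypePerm g h2⟩, ?_⟩
      apply Subtype.ext
      show ofSubtype (subtypePerm g hc') * ofSubtype (subtypePerm g h2) = g
      apply Equiv.ext; intro x
      by_cases hx : x ∈ c.support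
      · have hfix : ofSubtype (subtypePerm g h2) x = x :=
          ofSubtype_apply_of_not_mem _ (by simpa [hp] using hx)
        simp only [Equiv.Perm.coe_mul, Function.comp_apply, hfix]
        rw [ofSubtype_apply_of_mem (subtypePerm g hc') hx]
        rfl
      · have hstep : ofSubtype (subtypePerm g h2) x = g x :=
          ofSubtype_apply_of_mem (p := p) (subtypePerm g h2) (by simpa [hp] using hx)
        have hgx : g x ∉ c.support := fun hmem => hx ((hc' x).mp hmem)
        simp only [Equiv.Perm.coe_mul, Function.comp_apply, hstep]
        exact ofSubtype_apply_of_not_mem (subtypePerm g hc') hgx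
  have := Nat.card_eq_of_bijective ψ hbij
  rw [← this, Nat.card_prod, Nat.card_zpowers, hc.orderOf, hcard]
  congr 1
  rw [Nat.card_eq_fintype_card, Fintype.card_perm]
  congr 1
  have : Fintype.card {x : Fin n // p x} = Fintype.card (Fin n) - c.support.card := by
    simp only [hp]
    rw [Fintype.card_subtype_compl, Fintype.card_coe]
  rw [this, Fintype.card_fin, hcard]

theorem stmt_2 (n m : ℕ) (hm : 2 ≤ m) (hmn : m ≤ n)
    (E : Subgroup (Equiv.Perm (Fin n)))
    (c : Equiv.Perm (Fin n)) (hc : c.IsCycle) (hcard : c.support.card = m) :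
    Nat.card {σ : Equiv.Perm (Fin n) //
        ∀ x ∈ Subgroup.zpowers c, σ * x * σ⁻¹ ∈ E}
      = Nat.card {τ : Equiv.Perm (Fin n) // τ ∈ E ∧ τ.IsCycle ∧ τ.support.card = m}
          * (m * (n - m).factorial) := by
  classical
  set T := {τ : Equiv.Perm (Fin n) // τ ∈ E ∧ τ.IsCycle ∧ τ.support.card = m} with hT
  set C := {z : Equiv.Perm (Fin n) // Commute z c} with hC
  -- section choosing a conjugator for each τ ∈ T
  have hconj : ∀ τ : T, ∃ σ : Equiv.Perm (Fin n), σ * c * σ⁻¹ = (τ : Equiv.Perm (Fin n)) := by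
    intro τ
    exact isConj_iff.mp (hc.isConj τ.2.2.1 (hcard.trans τ.2.2.2.symm))
  choose s hs using hconj
  let φ : T × C → {σ : Equiv.Perm (Fin n) // ∀ x ∈ Subgroup.zpowers c, σ * x * σ⁻¹ ∈ E} := by
    refine fun tz => ⟨s tz.1 * (tz.2 : Equiv.Perm (Fin n)), ?_⟩
    rintro x ⟨k, rfl⟩
    have hcomm : (tz.2 : Equiv.Perm (Fin n)) * c ^ k * (tz.2 : Equiv.Perm (Fin n))⁻¹ = c ^ k := by
      rw [(tz.2.2.zpow_right k).eq, mul_inv_cancel_right]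
    have : (s tz.1 * (tz.2 : Equiv.Perm (Fin n))) * c ^ k *
        (s tz.1 * (tz.2 : Equiv.Perm (Fin n)))⁻¹ = (tz.1 : Equiv.Perm (Fin n)) ^ k := by
      calc (s tz.1 * (tz.2 : Equiv.Perm (Fin n))) * c ^ k *
          (s tz.1 * (tz.2 : Equiv.Perm (Fin n)))⁻¹
          = s tz.1 * ((tz.2 : Equiv.Perm (Fin n)) * c ^ k *
            (tz.2 : Equiv.Perm (Fin n))⁻¹) * (s tz.1)⁻¹ := by group
        _ = s tz.1 * c ^ k * (s tz.1)⁻¹ := by rw [hcomm]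
        _ = (s tz.1 * c * (s tz.1)⁻¹) ^ k := (conj_zpow ..).symm
        _ = (tz.1 : Equiv.Perm (Fin n)) ^ k := by rw [hs tz.1]
    rw [this]
    exact Subgroup.zpow_mem E tz.1.2.1 k
  have hbij : Function.Bijective φ := by
    constructor
    · rintro ⟨τ1, z1⟩ ⟨τ2, z2⟩ h
      have h' : s τ1 * (z1 : Equiv.Perm (Fin n)) = s τ2 * (z2 : Equiv.Perm (Fin n)) :=
        congrArg Subtype.val h
      have hτc : ∀ (τ : T) (z : C),
          (s τ * (z : Equiv.Perm (Fin n))) * c * (s τ * (z : Equiv.Perm (Fin n)))⁻¹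
            = (τ : Equiv.Perm (Fin n)) := by
        intro τ z
        have hzc : (z : Equiv.Perm (Fin n)) * c * (z : Equiv.Perm (Fin n))⁻¹ = c := by
          rw [z.2.eq, mul_inv_cancel_right]
        calc (s τ * (z : Equiv.Perm (Fin n))) * c * (s τ * (z : Equiv.Perm (Fin n)))⁻¹
            = s τ * ((z : Equiv.Perm (Fin n)) * c * (z : Equiv.Perm (Fin n))⁻¹)
              * (s τ)⁻¹ := by group
          _ = s τ * c * (s τ)⁻¹ := by rw [hzc]
          _ = (τ : Equiv.Perm (Fin n)) := hs τ
      have hττ : (τ1 : Equiv.Perm (Fin n)) = τ2 := by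
        rw [← hτc τ1 z1, ← hτc τ2 z2, h']
      have hτeq : τ1 = τ2 := Subtype.ext hττ
      subst hτeq
      have : (z1 : Equiv.Perm (Fin n)) = z2 := mul_left_cancel h'
      exact Prod.ext rfl (Subtype.ext this)
    · rintro ⟨σ, hσ⟩
      have hmem : σ * c * σ⁻¹ ∈ E := hσ c (Subgroup.mem_zpowers c)
      have hcyc : (σ * c * σ⁻¹).IsCycle := hc.conj
      have hcardτ : (σ * c * σ⁻¹).support.card = m := by
        rw [Equiv.Perm.card_support_conj, hcard]
      set τ : T := ⟨σ * c * σ⁻¹, hmem, hcyc, hcardτ⟩ with hτdef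
      have hz : Commute ((s τ)⁻¹ * σ) c := by
        have h1 : ((s τ)⁻¹ * σ) * c * ((s τ)⁻¹ * σ)⁻¹ = c := by
          have := hs τ
          rw [hτdef] at this
          simp only at this
          calc ((s τ)⁻¹ * σ) * c * ((s τ)⁻¹ * σ)⁻¹
              = (s τ)⁻¹ * (σ * c * σ⁻¹) * s τ := by group
            _ = (s τ)⁻¹ * (s τ * c * (s τ)⁻¹) * s τ := by rw [this]
            _ = c := by group
        exact mul_inv_eq_iff_eq_mul.mp h1
      refine ⟨⟨τ, ⟨(s τ)⁻¹ * σ, hz⟩⟩, ?_⟩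
      apply Subtype.ext
      show s τ * ((s τ)⁻¹ * σ) = σ
      group
  rw [← Nat.card_eq_of_bijective φ hbij, Nat.card_prod,
    card_commute_cycle n m hmn c hc hcard]
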